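/- arXiv:2104.13481 — 2 statements merged into one kernel-verified Lean document; each statement's English description precedes it below -/
import Mathlib

section
/- Let T be an inverse semigroup, FG(T) the free group on T, and ν : FG(T) → T¹ the evaluation of reduced words. Let Φ(t) = ψ(φ⁻¹(t)), where φ : F(T ⊔ T⁻¹) → T is the evaluation homomorphism and ψ : F(T ⊔ T⁻¹) → FG(T) the natural projection. Then for all t ∈ T and w ∈ FG(T): w ∈ Φ(t) if and only if t ≤ ν(w). -/
/-- An inverse semigroup: every element `s` has a (unique) inverse `s⁻¹`
with `s * s⁻¹ * s = s` and `s⁻¹ * s * s⁻¹ = s⁻¹`. -/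
class InverseSemigroup (S : Type*) extends Semigroup S, Inv S where
  mul_inv_mul : ∀ s : S, s * s⁻¹ * s = s
  inv_mul_inv : ∀ s : S, s⁻¹ * s * s⁻¹ = s⁻¹
  inv_unique : ∀ s t : S, s * t * s = s → t * s * t = t → t = s⁻¹

namespace InverseSemigroup

/-- The set of idempotents of a multiplicative structure. -/
def E (S : Type*) [Mul S] : Set S := {e | e * e = e}

/-- The natural partial order: `s ≤ t` iff `s = s * s⁻¹ * t`. -/
def nle {S : Type*} [Mul S] [Inv S] (s t : S) : Prop := s = s * s⁻¹ * t

/-- `r s = s * s⁻¹`. -/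
def r {S : Type*} [Mul S] [Inv S] (s : S) : S := s * s⁻¹

/-- A Clifford semigroup (semilattice of groups): idempotents are central. -/
def IsClifford (S : Type*) [Mul S] : Prop := ∀ e ∈ E S, ∀ s : S, e * s = s * e

end InverseSemigroup

open InverseSemigroup

namespace InverseSemigroup
variable {S : Type*} [InverseSemigroup S]

lemma inv_inv' (s : S) : s⁻¹⁻¹ = s :=
  (inv_unique s⁻¹ s (inv_mul_inv s) (mul_inv_mul s)).symm

lemma idem_inv {e : S} (he : e * e = e) : e⁻¹ = e :=
  (inv_unique e e (by rw [he, he]) (by rw [he, he])).symm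

lemma r_idem (s : S) : (s * s⁻¹) * (s * s⁻¹) = s * s⁻¹ := by
  rw [mul_assoc, ← mul_assoc s⁻¹ s s⁻¹, inv_mul_inv]

lemma idem_mul_idem {e f : S} (he : e * e = e) (hf : f * f = f) :
    (e * f) * (e * f) = e * f := by
  have hec : ∀ x : S, e * (e * x) = e * x := fun x => by rw [← mul_assoc, he]
  have hfc : ∀ x : S, f * (f * x) = f * x := fun x => by rw [← mul_assoc, hf]
  obtain ⟨a, ha⟩ : ∃ a, a = (e * f)⁻¹ := ⟨_, rfl⟩
  have hstep : a * (e * f) * a = a := by rw [ha]; exact inv_mul_inv (e * f)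
  have hmam : e * f * a * (e * f) = e * f := by rw [ha]; exact mul_inv_mul (e * f)
  have h1 : f * a * e = a := by
    refine (inv_unique (e * f) (f * a * e) ?_ ?_).trans ha.symm
    · calc e * f * (f * a * e) * (e * f)
          = e * f * a * (e * f) := by simp only [mul_assoc, hec, hfc]
        _ = e * f := hmam
    · calc f * a * e * (e * f) * (f * a * e)
          = f * (a * (e * f) * a) * e := by simp only [mul_assoc, hec, hfc]
        _ = f * a * e := by rw [hstep, mul_assoc]
  have h2 : a * a = a := by
    conv_lhs => rw [← h1]
    calc (f * a * e) * (f * a * e)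
        = f * (a * (e * f) * a) * e := by simp only [mul_assoc]
      _ = f * a * e := by rw [hstep, mul_assoc]
      _ = a := h1
  have h3 : e * f = a := by
    calc e * f = ((e * f)⁻¹)⁻¹ := (inv_inv' _).symm
      _ = a⁻¹ := by rw [← ha]
      _ = a := idem_inv h2
  rw [h3, h2]

lemma idem_comm {e f : S} (he : e * e = e) (hf : f * f = f) : e * f = f * e := by
  have hec : ∀ x : S, e * (e * x) = e * x := fun x => by rw [← mul_assoc, he]
  have hfc : ∀ x : S, f * (f * x) = f * x := fun x => by rw [← mul_assoc, hf]
  have hef := idem_mul_idem he hf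
  refine ((inv_unique (e * f) (f * e) ?_ ?_).trans (idem_inv hef)).symm
  · calc e * f * (f * e) * (e * f) = (e * f) * (e * f) := by simp only [mul_assoc, hec, hfc]
      _ = e * f := hef
  · calc f * e * (e * f) * (f * e) = (f * e) * (f * e) := by
          simp only [mul_assoc, hec, hfc]
      _ = f * e := idem_mul_idem hf he



lemma l_idem (s : S) : (s⁻¹ * s) * (s⁻¹ * s) = s⁻¹ * s := by
  have h := r_idem s⁻¹
  rwa [inv_inv'] at h

lemma mul_inv_rev' (s t : S) : (s * t)⁻¹ = t⁻¹ * s⁻¹ := by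
  have h1 : (t * t⁻¹) * (s⁻¹ * s) = (s⁻¹ * s) * (t * t⁻¹) := idem_comm (r_idem t) (l_idem s)
  refine (inv_unique (s * t) (t⁻¹ * s⁻¹) ?_ ?_).symm
  · calc s * t * (t⁻¹ * s⁻¹) * (s * t)
        = s * ((t * t⁻¹) * (s⁻¹ * s)) * t := by simp only [mul_assoc]
      _ = s * ((s⁻¹ * s) * (t * t⁻¹)) * t := by rw [h1]
      _ = (s * s⁻¹ * s) * (t * t⁻¹ * t) := by simp only [mul_assoc]
      _ = s * t := by rw [mul_inv_mul, mul_inv_mul]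
  · calc t⁻¹ * s⁻¹ * (s * t) * (t⁻¹ * s⁻¹)
        = t⁻¹ * ((s⁻¹ * s) * (t * t⁻¹)) * s⁻¹ := by simp only [mul_assoc]
      _ = t⁻¹ * ((t * t⁻¹) * (s⁻¹ * s)) * s⁻¹ := by rw [← h1]
      _ = (t⁻¹ * t * t⁻¹) * (s⁻¹ * s * s⁻¹) := by simp only [mul_assoc]
      _ = t⁻¹ * s⁻¹ := by rw [inv_mul_inv, inv_mul_inv]

lemma nle_of_idem {e s t : S} (he : e * e = e) (h : s = e * t) : nle s t := by
  have hinv : s⁻¹ = t⁻¹ * e := by rw [h, mul_inv_rev' e t, idem_inv he]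
  have hcomm : e * (t * t⁻¹) = (t * t⁻¹) * e := idem_comm he (r_idem t)
  show s = s * s⁻¹ * t
  calc s = e * t := h
    _ = e * (e * (t * t⁻¹)) * t := by
        have hec : ∀ x : S, e * (e * x) = e * x := fun x => by rw [← mul_assoc, he]
        have htt : t * (t⁻¹ * t) = t := by rw [← mul_assoc, mul_inv_mul]
        exact (by simp only [mul_assoc, htt, hec] : e * (e * (t * t⁻¹)) * t = e * t).symm
    _ = e * ((t * t⁻¹) * e) * t := by rw [hcomm]
    _ = (e * t) * (t⁻¹ * e) * t := by simp only [mul_assoc]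
    _ = s * s⁻¹ * t := by rw [← h, ← hinv]



lemma nle_iff {s t : S} : nle s t ↔ ∃ e, e * e = e ∧ s = e * t :=
  ⟨fun h => ⟨s * s⁻¹, r_idem s, h⟩, fun ⟨_, he, h⟩ => nle_of_idem he h⟩

lemma nle_refl (s : S) : nle s s := (mul_inv_mul s).symm

lemma nle_trans {s t u : S} (h1 : nle s t) (h2 : nle t u) : nle s u := by
  obtain ⟨e, he, hs⟩ := nle_iff.mp h1
  obtain ⟨f, hf, ht⟩ := nle_iff.mp h2
  exact nle_of_idem (idem_mul_idem he hf) (by rw [hs, ht, mul_assoc])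

lemma conj_idem {e : S} (a : S) (he : e * e = e) : (a * e * a⁻¹) * (a * e * a⁻¹) = a * e * a⁻¹ := by
  have h : e * (a⁻¹ * a) = (a⁻¹ * a) * e := idem_comm he (l_idem a)
  calc (a * e * a⁻¹) * (a * e * a⁻¹)
      = a * (e * (a⁻¹ * a)) * (e * a⁻¹) := by simp only [mul_assoc]
    _ = a * ((a⁻¹ * a) * e) * (e * a⁻¹) := by rw [h]
    _ = (a * a⁻¹ * a) * (e * e) * a⁻¹ := by simp only [mul_assoc]
    _ = a * e * a⁻¹ := by rw [mul_inv_mul, he]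

lemma nle_mul_left {s t : S} (a : S) (h : nle s t) : nle (a * s) (a * t) := by
  obtain ⟨e, he, hs⟩ := nle_iff.mp h
  refine nle_of_idem (conj_idem a he) ?_
  have hc : e * (a⁻¹ * a) = (a⁻¹ * a) * e := idem_comm he (l_idem a)
  have haa : ∀ x : S, a * (a⁻¹ * (a * x)) = a * x := fun x => by
    simp only [← mul_assoc]; rw [mul_inv_mul]
  calc a * s = a * (e * t) := by rw [hs]
    _ = a * ((a⁻¹ * a) * e) * t := by simp only [mul_assoc]; rw [haa]
    _ = (a * e * a⁻¹) * (a * t) := by rw [← hc]; simp only [mul_assoc]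

lemma nle_del (b c : S) : nle (b * b⁻¹ * c) c := nle_of_idem (r_idem b) rfl

end InverseSemigroup

instance instInvSgWithOne (T : Type*) [InverseSemigroup T] : InverseSemigroup (WithOne T) :=
  { (inferInstance : Semigroup (WithOne T)), (inferInstance : Inv (WithOne T)) with
    mul_inv_mul := fun s => by
      induction s using WithOne.recOneCoe with
      | one => simp
      | coe a =>
        rw [← WithOne.coe_inv, ← WithOne.coe_mul, ← WithOne.coe_mul,
          InverseSemigroup.mul_inv_mul]
    inv_mul_inv := fun s => by
      induction s using WithOne.recOneCoe with
      | one => simp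
      | coe a =>
        rw [← WithOne.coe_inv, ← WithOne.coe_mul, ← WithOne.coe_mul,
          InverseSemigroup.inv_mul_inv]
    inv_unique := fun s t h1 h2 => by
      induction s using WithOne.recOneCoe with
      | one =>
        simp only [one_mul, mul_one] at h1
        rw [h1, inv_one]
      | coe a =>
        induction t using WithOne.recOneCoe with
        | one =>
          simp only [one_mul, mul_one] at h2
          exact absurd h2 WithOne.coe_ne_one
        | coe b =>
          rw [← WithOne.coe_mul, ← WithOne.coe_mul, WithOne.coe_inj] at h1 h2
          rw [← WithOne.coe_inv, WithOne.coe_inj]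
          exact InverseSemigroup.inv_unique a b h1 h2 }

/-- Evaluate a word over the alphabet `T ⊔ T⁻¹` (encoded as `List (T × Bool)`,
with `(x, true) = [x]` and `(x, false) = [x]⁻¹`) in `T¹ = WithOne T`;
the empty word evaluates to `1`. -/
def evalWord {T : Type*} [InverseSemigroup T] (l : List (T × Bool)) : WithOne T :=
  l.foldr (fun p acc => (↑(if p.2 then p.1 else p.1⁻¹) : WithOne T) * acc) 1

/-- The map `ν : FG(T) → T¹` evaluating the reduced word of an element of the free
group on `T`; `ν(ε) = 1`. -/
def nu {T : Type*} [InverseSemigroup T] [DecidableEq T] (w : FreeGroup T) : WithOne T :=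
  evalWord (FreeGroup.toWord w)


section MainAux
variable {T : Type*} [InverseSemigroup T] [DecidableEq T]

lemma evalWord_nil : evalWord ([] : List (T × Bool)) = 1 := rfl

lemma evalWord_cons (p : T × Bool) (l : List (T × Bool)) :
    evalWord (p :: l) = (if p.2 then (↑p.1 : WithOne T) else (↑p.1)⁻¹) * evalWord l := rfl

lemma nle_evalWord_reduce (l : List (T × Bool)) :
    nle (evalWord l) (evalWord (FreeGroup.reduce l)) := by
  induction l with
  | nil => exact nle_refl _
  | cons x l ih =>
    rw [FreeGroup.reduce.cons]
    cases hr : FreeGroup.reduce l with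
    | nil =>
      rw [hr, evalWord_nil] at ih
      dsimp only
      rw [evalWord_cons, evalWord_cons, evalWord_nil, mul_one]
      have h := nle_mul_left (S := WithOne T)
        (if x.2 then (↑x.1 : WithOne T) else (↑x.1)⁻¹) ih
      rwa [mul_one] at h
    | cons y ys =>
      rw [hr] at ih
      dsimp only
      by_cases hc : x.1 = y.1 ∧ x.2 = !y.2
      · rw [if_pos hc]
        obtain ⟨h1, h2⟩ := hc
        have hmid : nle (evalWord (x :: l))
            ((if x.2 then (↑x.1 : WithOne T) else (↑x.1)⁻¹) * evalWord (y :: ys)) := by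
          rw [evalWord_cons]
          exact nle_mul_left _ ih
        refine nle_trans hmid ?_
        rw [evalWord_cons, h1, h2]
        cases hy : y.2 with
        | true =>
          simp only [Bool.not_true, if_false, if_true]
          rw [← mul_assoc]
          have hd := nle_del ((↑y.1 : WithOne T)⁻¹) (evalWord ys)
          rwa [inv_inv'] at hd
        | false =>
          simp only [Bool.not_false, if_true, if_false]
          rw [← mul_assoc]
          exact nle_del _ _
      · rw [if_neg hc]
        rw [evalWord_cons, evalWord_cons]
        exact nle_mul_left _ ih

end MainAux

/-- `w ∈ Φ(t)` iff `t ≤ ν(w)`, where `Φ(t) = ψ(φ⁻¹(t))` with `φ` the evaluation of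
nonempty words in `T` and `ψ` the projection onto the free group. -/
theorem mem_Phi_iff_le_nu {T : Type*} [InverseSemigroup T] [DecidableEq T]
    (t : T) (w : FreeGroup T) :
    (∃ l : List (T × Bool), l ≠ [] ∧ evalWord l = (t : WithOne T) ∧ FreeGroup.mk l = w) ↔
      nle (t : WithOne T) (nu w) := by
  constructor
  · rintro ⟨l, -, hev, hmk⟩
    rw [nu, ← hmk, FreeGroup.toWord_mk, ← hev]
    exact nle_evalWord_reduce l
  · intro h
    refine ⟨(t, true) :: (t, false) :: w.toWord, by simp, ?_, ?_⟩
    · rw [evalWord_cons, evalWord_cons]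
      simp only [if_pos rfl]
      rw [if_neg (by simp : ¬((t, false).2 = true))]
      rw [← mul_assoc]
      exact h.symm
    · have e1 : ((t, true) :: (t, false) :: w.toWord)
          = [(t, true)] ++ ([(t, false)] ++ w.toWord) := rfl
      rw [e1, ← FreeGroup.mul_mk, ← FreeGroup.mul_mk]
      have e2 : FreeGroup.mk [(t, false)] = (FreeGroup.mk [(t, true)])⁻¹ := by
        rw [FreeGroup.inv_mk]; rfl
      rw [e2, FreeGroup.mk_toWord, ← mul_assoc, mul_inv_cancel, one_mul]
end

section
/- Let T be an inverse semigroup, A a T-module, and c ∈ Z³_≤(T¹, A¹) a strongly normalized 3-cocycle. Define ξ_t : F(T ⊔ T⁻¹) → A recursively by ξ_t([x]) = θ(r(tx)); ξ_t([x]⁻¹u) = c(t, x⁻¹, x)⁻¹ ξ_t([x⁻¹]u); ξ_t([x][y]v) = c(t,x,y) ξ_t([xy]v); ξ_t([x][y]⁻¹v) = c(t, x y⁻¹, y)⁻¹ ξ_t([x y⁻¹]v). Then ξ_t(w) ∈ A_{θ(r(t·φ(w)))} for every word w, where φ is the evaluation homomorphism and r(s) = s s⁻¹. -/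
open InverseSemigroup

/-- The value in `T` of the letter `(x, true) = [x]` or `(x, false) = [x]⁻¹`. -/
def letterVal {T : Type*} [InverseSemigroup T] (p : T × Bool) : T :=
  if p.2 then p.1 else p.1⁻¹

/-- The evaluation `φ` in `T` of a nonempty word `p :: l` over `T ⊔ T⁻¹`. -/
def wordVal {T : Type*} [InverseSemigroup T] (p : T × Bool) (l : List (T × Bool)) : T :=
  l.foldl (fun acc q => acc * letterVal q) (letterVal p)

section ISLemmas
variable {S : Type*} [InverseSemigroup S]

lemma IS.mii (s : S) : s * s⁻¹ * s = s := InverseSemigroup.mul_inv_mul s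
lemma IS.imi (s : S) : s⁻¹ * s * s⁻¹ = s⁻¹ := InverseSemigroup.inv_mul_inv s

lemma IS.inv_inv (s : S) : s⁻¹⁻¹ = s :=
  (InverseSemigroup.inv_unique s⁻¹ s (IS.imi s) (IS.mii s)).symm

lemma IS.idem_inv {e : S} (he : e * e = e) : e⁻¹ = e :=
  (InverseSemigroup.inv_unique e e (by rw [he, he]) (by rw [he, he])).symm

lemma IS.mul_idem {e f : S} (he : e * e = e) (hf : f * f = f) :
    (e * f) * (e * f) = e * f := by
  set s := (e * f)⁻¹ with hs
  have h1 : (e * f) * (f * s * e) * (e * f) = e * f := by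
    have : (e * f) * (f * s * e) * (e * f) = e * ((f * f) * s * (e * e)) * f := by
      simp only [mul_assoc]
    rw [this, he, hf]
    have : e * (f * s * e) * f = (e * f) * s * (e * f) := by simp only [mul_assoc]
    rw [this, hs, IS.mii]
  have h2 : (f * s * e) * (e * f) * (f * s * e) = f * s * e := by
    have : (f * s * e) * (e * f) * (f * s * e) = f * (s * ((e * e) * (f * f)) * s) * e := by
      simp only [mul_assoc]
    rw [this, he, hf]
    have h3 : s * (e * f) * s = s := by rw [hs]; exact IS.imi (e * f)
    rw [h3]
  have hse : f * s * e = s := InverseSemigroup.inv_unique (e * f) (f * s * e) h1 h2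
  have hss : s * s = s := by
    conv_lhs => rw [← hse]
    have : (f * s * e) * (f * s * e) = f * s * ((e * f) * s) * e := by simp only [mul_assoc]
    rw [this]
    have h3 : s * ((e * f) * s) = s := by
      rw [hs, ← mul_assoc]; exact IS.imi (e * f)
    rw [mul_assoc f s, h3, hse]
  have : e * f = s⁻¹ := by rw [hs, IS.inv_inv]
  rw [this, IS.idem_inv hss, hss]

lemma IS.idem_comm {e f : S} (he : e * e = e) (hf : f * f = f) :
    e * f = f * e := by
  have hef := IS.mul_idem he hf
  have hfe := IS.mul_idem hf he
  have h1 : (e * f) * (f * e) * (e * f) = e * f := by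
    have : (e * f) * (f * e) * (e * f) = e * (f * f) * (e * e) * f := by
      simp only [mul_assoc]
    rw [this, hf, he]
    have h4 : e * f * e * f = e * f * (e * f) := by simp only [mul_assoc]
    rw [h4, hef]
  have h2 : (f * e) * (e * f) * (f * e) = f * e := by
    have : (f * e) * (e * f) * (f * e) = f * (e * e) * (f * f) * e := by
      simp only [mul_assoc]
    rw [this, he, hf]
    have h4 : f * e * f * e = f * e * (f * e) := by simp only [mul_assoc]
    rw [h4, hfe]
  have := InverseSemigroup.inv_unique (e * f) (f * e) h1 h2
  rw [this, IS.idem_inv hef]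

lemma IS.r_idem (u : S) : (u * u⁻¹) * (u * u⁻¹) = u * u⁻¹ := by
  have : (u * u⁻¹) * (u * u⁻¹) = (u * u⁻¹ * u) * u⁻¹ := by simp only [mul_assoc]
  rw [this, IS.mii]

lemma IS.l_idem (u : S) : (u⁻¹ * u) * (u⁻¹ * u) = u⁻¹ * u := by
  have : (u⁻¹ * u) * (u⁻¹ * u) = (u⁻¹ * u * u⁻¹) * u := by simp only [mul_assoc]
  rw [this, IS.imi]

lemma IS.mul_inv_rev (a b : S) : (a * b)⁻¹ = b⁻¹ * a⁻¹ := by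
  symm
  apply InverseSemigroup.inv_unique
  · have : (a * b) * (b⁻¹ * a⁻¹) * (a * b) = a * ((b * b⁻¹) * (a⁻¹ * a)) * b := by
      simp only [mul_assoc]
    rw [this, IS.idem_comm (IS.r_idem b) (IS.l_idem a)]
    have : a * (a⁻¹ * a * (b * b⁻¹)) * b = (a * a⁻¹ * a) * (b * b⁻¹ * b) := by
      simp only [mul_assoc]
    rw [this, IS.mii, IS.mii]
  · have : (b⁻¹ * a⁻¹) * (a * b) * (b⁻¹ * a⁻¹) = b⁻¹ * ((a⁻¹ * a) * (b * b⁻¹)) * a⁻¹ := by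
      simp only [mul_assoc]
    rw [this, IS.idem_comm (IS.l_idem a) (IS.r_idem b)]
    have : b⁻¹ * (b * b⁻¹ * (a⁻¹ * a)) * a⁻¹ = (b⁻¹ * b * b⁻¹) * (a⁻¹ * a * a⁻¹) := by
      simp only [mul_assoc]
    rw [this, IS.imi, IS.imi]

lemma IS.r_mul_left (t u : S) : (t * u) * (t * u)⁻¹ = t * (u * u⁻¹) * t⁻¹ := by
  rw [IS.mul_inv_rev]; simp only [mul_assoc]

/-- Key lemma: if `r u` absorbs `s` on the left then `r (t u) * r (t s) = r (t s)`. -/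
lemma IS.key {t u s : S} (h : (u * u⁻¹) * s = s) :
    ((t * u) * (t * u)⁻¹) * ((t * s) * (t * s)⁻¹) = (t * s) * (t * s)⁻¹ := by
  rw [IS.r_mul_left, IS.r_mul_left]
  have step : (u * u⁻¹) * (t⁻¹ * (t * ((s * s⁻¹) * t⁻¹)))
      = t⁻¹ * (t * ((s * s⁻¹) * t⁻¹)) := by
    have h1 : (u * u⁻¹) * (t⁻¹ * (t * ((s * s⁻¹) * t⁻¹)))
        = ((u * u⁻¹) * (t⁻¹ * t)) * ((s * s⁻¹) * t⁻¹) := by simp only [mul_assoc]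
    rw [h1, IS.idem_comm (IS.r_idem u) (IS.l_idem t)]
    have h2 : ((t⁻¹ * t) * (u * u⁻¹)) * ((s * s⁻¹) * t⁻¹)
        = (t⁻¹ * t) * ((((u * u⁻¹) * s) * s⁻¹) * t⁻¹) := by simp only [mul_assoc]
    rw [h2, h]
    simp only [mul_assoc]
  calc t * (u * u⁻¹) * t⁻¹ * (t * (s * s⁻¹) * t⁻¹)
      = t * ((u * u⁻¹) * (t⁻¹ * (t * ((s * s⁻¹) * t⁻¹)))) := by simp only [mul_assoc]
    _ = t * (t⁻¹ * (t * ((s * s⁻¹) * t⁻¹))) := by rw [step]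
    _ = (t * t⁻¹ * t) * ((s * s⁻¹) * t⁻¹) := by simp only [mul_assoc]
    _ = t * (s * s⁻¹) * t⁻¹ := by rw [IS.mii]; simp only [mul_assoc]

lemma IS.rxy (x y : S) : ((x * y⁻¹) * y) * ((x * y⁻¹) * y)⁻¹ = (x * y⁻¹) * (x * y⁻¹)⁻¹ := by
  rw [IS.r_mul_left, IS.mul_inv_rev, IS.inv_inv]
  have : x * y⁻¹ * (y * y⁻¹) * (y * x⁻¹) = x * (y⁻¹ * y * y⁻¹ * y) * x⁻¹ := by
    simp only [mul_assoc]
  rw [this, IS.imi]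
  have : x * (y⁻¹ * y) * x⁻¹ = x * y⁻¹ * (y * x⁻¹) := by simp only [mul_assoc]
  rw [this]

lemma IS.rinv (x : S) : (x⁻¹ * x) * (x⁻¹ * x)⁻¹ = x⁻¹ * x := by
  rw [IS.mul_inv_rev, IS.inv_inv]
  have : x⁻¹ * x * (x⁻¹ * x) = (x⁻¹ * x * x⁻¹) * x := by simp only [mul_assoc]
  rw [this, IS.imi]

end ISLemmas

section MoreLemmas
variable {S : Type*} [InverseSemigroup S]

lemma IS.r_mul_comm (hcomm : ∀ a b : S, a * b = b * a) (a b : S) :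
    (a * b) * (a * b)⁻¹ = (a * a⁻¹) * (b * b⁻¹) := by
  rw [IS.mul_inv_rev]
  calc a * b * (b⁻¹ * a⁻¹) = a * ((b * b⁻¹) * a⁻¹) := by simp only [mul_assoc]
    _ = a * (a⁻¹ * (b * b⁻¹)) := by rw [hcomm (b * b⁻¹) a⁻¹]
    _ = a * a⁻¹ * (b * b⁻¹) := by rw [← mul_assoc]

lemma IS.r_inv_comm (hcomm : ∀ a b : S, a * b = b * a) (a : S) :
    a⁻¹ * a⁻¹⁻¹ = a * a⁻¹ := by
  rw [IS.inv_inv, hcomm]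

lemma IS.foldl_absorb {α : Type*} (g : α → S) :
    ∀ (l : List α) (a : S),
      (a * a⁻¹) * l.foldl (fun acc q => acc * g q) a
        = l.foldl (fun acc q => acc * g q) a
  | [], a => IS.mii a
  | q :: u, a => by
    simp only [List.foldl_cons]
    have ih := IS.foldl_absorb g u (a * g q)
    set s := u.foldl (fun acc q => acc * g q) (a * g q) with hs
    conv_lhs => rw [← ih]
    have h1 : (a * a⁻¹) * ((a * g q) * (a * g q)⁻¹ * s)
        = ((a * a⁻¹ * a) * g q) * ((a * g q)⁻¹ * s) := by simp only [mul_assoc]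
    rw [h1, IS.mii, ← mul_assoc]
    exact ih

end MoreLemmas

/-- The auxiliary map `ξ_t` built from a strongly normalized 3-cocycle satisfies
`ξ_t(w) ∈ A_{θ(r(t φ(w)))}` for every nonempty word `w`. -/
theorem xi_mem_component {T A : Type*} [InverseSemigroup T] [InverseSemigroup A]
    (θ : T → A) (η : T → A → A)
    (hAcomm : ∀ a b : A, a * b = b * a)
    (hθE : ∀ e ∈ E T, θ e ∈ E A)
    (hθinj : ∀ e ∈ E T, ∀ f ∈ E T, θ e = θ f → e = f)
    (hθsurj : ∀ a ∈ E A, ∃ e ∈ E T, θ e = a)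
    (hθmul : ∀ e ∈ E T, ∀ f ∈ E T, θ (e * f) = θ e * θ f)
    (hηhom : ∀ t u : T, ∀ a : A, η (t * u) a = η t (η u a))
    (hηmul : ∀ t : T, ∀ a b : A, η t (a * b) = η t a * η t b)
    (hη1 : ∀ e ∈ E T, ∀ a : A, η e a = θ e * a)
    (hη2 : ∀ t : T, ∀ e ∈ E T, η t (θ e) = θ (t * e * t⁻¹))
    (c : T → T → T → A)
    (hc : ∀ x y z : T, c x y z * (c x y z)⁻¹ = θ (r (x * y * z)))
    (hcoc : ∀ x y z w : T,
      η x (c y z w) * c x y z * c x (y * z) w = c x y (z * w) * c (x * y) z w)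
    (hop : ∀ x x' y y' z z' : T, nle x x' → nle y y' → nle z z' →
      nle (c x y z) (c x' y' z'))
    (hsn : ∀ x y z : T, (x ∈ E T ∨ y ∈ E T ∨ z ∈ E T) →
      c x y z = θ (r (x * y * z)))
    (ξ : T → List (T × Bool) → A)
    (hξ1 : ∀ t x : T, ξ t [(x, true)] = θ (r (t * x)))
    (hξ2 : ∀ t x : T, ∀ u : List (T × Bool),
      ξ t ((x, false) :: u) = (c t x⁻¹ x)⁻¹ * ξ t ((x⁻¹, true) :: u))
    (hξ3 : ∀ t x y : T, ∀ v : List (T × Bool),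
      ξ t ((x, true) :: (y, true) :: v) = c t x y * ξ t ((x * y, true) :: v))
    (hξ4 : ∀ t x y : T, ∀ v : List (T × Bool),
      ξ t ((x, true) :: (y, false) :: v) =
        (c t (x * y⁻¹) y)⁻¹ * ξ t ((x * y⁻¹, true) :: v))
    : ∀ t : T, ∀ p : T × Bool, ∀ l : List (T × Bool),
      ξ t (p :: l) * (ξ t (p :: l))⁻¹ = θ (r (t * wordVal p l)) := by
  have memE : ∀ s : T, s * s = s → s ∈ E T := fun s h => h
  have hrE : ∀ u : T, u * u⁻¹ ∈ E T := fun u => IS.r_idem u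
  have idemθ : ∀ u : T, θ (r u) * (θ (r u))⁻¹ = θ (r u) := by
    intro u
    have h : θ (r u) * θ (r u) = θ (r u) := hθE (r u) (hrE u)
    rw [IS.idem_inv h, h]
  -- main claim for head-letter `[x]` (positive), by induction on the tail
  have P : ∀ l : List (T × Bool), ∀ t x : T,
      ξ t ((x, true) :: l) * (ξ t ((x, true) :: l))⁻¹ = θ (r (t * wordVal (x, true) l)) := by
    intro l
    induction l with
    | nil =>
      intro t x
      rw [hξ1]
      have hw : wordVal (x, true) ([] : List (T × Bool)) = x := by
        simp [wordVal, letterVal]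
      rw [hw]
      exact idemθ (t * x)
    | cons q v ih =>
      intro t x
      obtain ⟨y, b'⟩ := q
      cases b' with
      | true =>
        rw [hξ3, IS.r_mul_comm hAcomm, hc, ih t (x * y)]
        have hw : wordVal (x, true) ((y, true) :: v) = wordVal (x * y, true) v := by
          simp [wordVal, letterVal]
        rw [hw]
        set s := wordVal (x * y, true) v with hsdef
        have hwv : s = v.foldl (fun acc q => acc * letterVal q) (x * y) := by
          rw [hsdef]; simp [wordVal, letterVal]
        have h0 : ((x * y) * (x * y)⁻¹) * s = s := by
          rw [hwv]; exact IS.foldl_absorb letterVal v (x * y)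
        have keyeq : (t * x * y) * (t * x * y)⁻¹ * ((t * s) * (t * s)⁻¹)
            = (t * s) * (t * s)⁻¹ := by
          rw [mul_assoc t x y]
          exact IS.key h0
        simp only [r]
        rw [← hθmul _ (hrE (t * x * y)) _ (hrE (t * s)), keyeq]
      | false =>
        rw [hξ4, IS.r_mul_comm hAcomm, IS.r_inv_comm hAcomm, hc, ih t (x * y⁻¹)]
        have hw : wordVal (x, true) ((y, false) :: v) = wordVal (x * y⁻¹, true) v := by
          simp [wordVal, letterVal]
        rw [hw]
        set s := wordVal (x * y⁻¹, true) v with hsdef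
        have hwv : s = v.foldl (fun acc q => acc * letterVal q) (x * y⁻¹) := by
          rw [hsdef]; simp [wordVal, letterVal]
        have h0 : ((x * y⁻¹) * y) * ((x * y⁻¹) * y)⁻¹ * s = s := by
          rw [IS.rxy, hwv]; exact IS.foldl_absorb letterVal v (x * y⁻¹)
        have keyeq : (t * (x * y⁻¹) * y) * (t * (x * y⁻¹) * y)⁻¹ * ((t * s) * (t * s)⁻¹)
            = (t * s) * (t * s)⁻¹ := by
          rw [mul_assoc t (x * y⁻¹) y]
          exact IS.key h0
        simp only [r]
        rw [← hθmul _ (hrE (t * (x * y⁻¹) * y)) _ (hrE (t * s)), keyeq]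
  intro t p l
  obtain ⟨x, b⟩ := p
  cases b with
  | true => exact P l t x
  | false =>
    rw [hξ2, IS.r_mul_comm hAcomm, IS.r_inv_comm hAcomm, hc, P l t x⁻¹]
    have hw : wordVal (x, false) l = wordVal (x⁻¹, true) l := by
      simp [wordVal, letterVal]
    rw [hw]
    set s := wordVal (x⁻¹, true) l with hsdef
    have hwv : s = l.foldl (fun acc q => acc * letterVal q) x⁻¹ := by
      rw [hsdef]; simp [wordVal, letterVal]
    have h0 : ((x⁻¹ * x) * (x⁻¹ * x)⁻¹) * s = s := by
      rw [IS.rinv]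
      have h1 := IS.foldl_absorb letterVal l x⁻¹
      rw [IS.inv_inv] at h1
      rw [hwv]; exact h1
    have keyeq : (t * x⁻¹ * x) * (t * x⁻¹ * x)⁻¹ * ((t * s) * (t * s)⁻¹)
        = (t * s) * (t * s)⁻¹ := by
      rw [mul_assoc t x⁻¹ x]
      exact IS.key h0
    simp only [r]
    rw [← hθmul _ (hrE (t * x⁻¹ * x)) _ (hrE (t * s)), keyeq]
end
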